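/- Let a,b,c,d,a',b',c',d' ∈ ℤ be such that Q_{2,1} = conv{(0,0),(a,b),(c,d)} and Q_{2,2} = conv{(0,0),(a',b'),(c',d')} are integral 2-simplices in ℝ². Suppose for some n > 2, the n-dimensional pyramids Q_{n,1} = conv{0, (a,b,0,…,0), (c,d,0,…,0), e_3, …, e_n} and Q_{n,2} = conv{0, (a',b',0,…,0), (c',d',0,…,0), e_3, …, e_n} in ℝⁿ are unimodularly equivalent. Then Q_{2,1} and Q_{2,2} are unimodularly equivalent. -/

import Mathlib

open Pointwise

/-- An affine-unimodular transformation `v ↦ A v + b` with `A ∈ GL_n(ℤ)`, `b ∈ ℤⁿ`. -/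
def IsUnimodularMap (n : ℕ) (U : (Fin n → ℝ) → (Fin n → ℝ)) : Prop :=
  ∃ (A : Matrix (Fin n) (Fin n) ℤ) (b : Fin n → ℤ),
    (A.det = 1 ∨ A.det = -1) ∧
    ∀ v, U v = (A.map (Int.cast : ℤ → ℝ)).mulVec v + fun i => (b i : ℝ)

/-- Unimodular equivalence of subsets of ℝⁿ. -/
def UnimodEquiv (n : ℕ) (P Q : Set (Fin n → ℝ)) : Prop :=
  ∃ U, IsUnimodularMap n U ∧ U '' P = Q

/-- The planar point `(a, b)` embedded in ℝⁿ (zero in all further coordinates). -/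
def planarPt (n : ℕ) (a b : ℤ) : Fin n → ℝ :=
  fun i => if (i : ℕ) = 0 then (a : ℝ) else if (i : ℕ) = 1 then (b : ℝ) else 0

/-- Vertex set of the n-dimensional pyramid over `conv{(0,0),(a,b),(c,d)}`:
the points `(0,0)`, `(a,b)`, `(c,d)` embedded in ℝⁿ together with the standard basis
vectors `e₃, …, eₙ`. -/
def pyramidVerts (n : ℕ) (a b c d : ℤ) : Set (Fin n → ℝ) :=
  {planarPt n 0 0, planarPt n a b, planarPt n c d} ∪
    {x | ∃ i : Fin n, 2 ≤ (i : ℕ) ∧ x = Pi.single i 1}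

/-- The n-dimensional pyramid over the 2-simplex `conv{(0,0),(a,b),(c,d)}`. -/
def pyramid (n : ℕ) (a b c d : ℤ) : Set (Fin n → ℝ) :=
  convexHull ℝ (pyramidVerts n a b c d)


noncomputable section AuxPyr

/-- affine scalar function -/
def AffFn {E : Type*} [AddCommGroup E] [Module ℝ E] (φ : E → ℝ) : Prop :=
  ∀ (p q : ℝ) (x y : E), p + q = 1 → φ (p • x + q • y) = p * φ x + q * φ y


lemma comb_le' {p q x y c : ℝ} (hp : 0 ≤ p) (hq : 0 ≤ q) (hpq : p + q = 1)
    (h1 : x ≤ c) (h2 : y ≤ c) : p * x + q * y ≤ c := by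
  have e1 : p * x ≤ p * c := mul_le_mul_of_nonneg_left h1 hp
  have e2 : q * y ≤ q * c := mul_le_mul_of_nonneg_left h2 hq
  have e3 : p * c + q * c = c := by rw [← add_mul, hpq, one_mul]
  linarith

lemma comb_eq_left {p q x y c : ℝ} (hp : 0 < p) (hq : 0 < q) (hpq : p + q = 1)
    (h1 : x ≤ c) (h2 : y ≤ c) (h3 : p * x + q * y = c) : x = c := by
  by_contra h'
  have hx : x < c := lt_of_le_of_ne h1 h'
  have e1 : p * x < p * c := mul_lt_mul_of_pos_left hx hp
  have e2 : q * y ≤ q * c := mul_le_mul_of_nonneg_left h2 hq.le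
  have e3 : p * c + q * c = c := by rw [← add_mul, hpq, one_mul]
  linarith

lemma comb_lt' {p q x y c : ℝ} (hp : 0 < p) (hq : 0 < q) (hpq : p + q = 1)
    (h1 : x < c) (h2 : y < c) : p * x + q * y < c := by
  have e1 : p * x < p * c := mul_lt_mul_of_pos_left h1 hp
  have e2 : q * y < q * c := mul_lt_mul_of_pos_left h2 hq
  have e3 : p * c + q * c = c := by rw [← add_mul, hpq, one_mul]
  linarith

lemma half_le {E : Type*} [AddCommGroup E] [Module ℝ E] {φ : E → ℝ} (hφ : AffFn φ)
    {s : Set E} {c : ℝ} (h : ∀ y ∈ s, φ y ≤ c) :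
    ∀ x ∈ convexHull ℝ s, φ x ≤ c := by
  have hconv : Convex ℝ {x | φ x ≤ c} := by
    intro x hx y hy p q hp hq hpq
    have := hφ p q x y hpq
    simp only [Set.mem_setOf_eq] at hx hy ⊢
    rw [this]
    exact comb_le' hp hq hpq hx hy
  exact fun x hx => convexHull_min h hconv hx

lemma face_unique {E : Type*} [AddCommGroup E] [Module ℝ E] {φ : E → ℝ} (hφ : AffFn φ)
    {s : Set E} {c : ℝ} {w : E} (hle : ∀ y ∈ s, φ y ≤ c)
    (heq : ∀ y ∈ s, φ y = c → y = w) :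
    ∀ x ∈ convexHull ℝ s, φ x = c → x = w := by
  have hconv : Convex ℝ {x | φ x ≤ c ∧ (φ x = c → x = w)} := by
    rintro x ⟨hx1, hx2⟩ y ⟨hy1, hy2⟩ p q hp hq hpq
    have key := hφ p q x y hpq
    constructor
    · rw [key]; exact comb_le' hp hq hpq hx1 hy1
    · intro hc
      rcases eq_or_lt_of_le hp with hp0 | hp0
      · have hq1 : q = 1 := by linarith
        have : p • x + q • y = y := by rw [← hp0, hq1]; simp
        rw [this] at hc ⊢
        exact hy2 hc
      rcases eq_or_lt_of_le hq with hq0 | hq0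
      · have hp1 : p = 1 := by linarith
        have : p • x + q • y = x := by rw [← hq0, hp1]; simp
        rw [this] at hc ⊢
        exact hx2 hc
      · have hcc : p * φ x + q * φ y = c := by rw [← key]; exact hc
        have hx3 : φ x = c := comb_eq_left hp0 hq0 hpq hx1 hy1 hcc
        have hy3 : φ y = c := by
          have hqp : q + p = 1 := by linarith
          have hcc2 : q * φ y + p * φ x = c := by linarith
          exact comb_eq_left hq0 hp0 hqp hy1 hx1 hcc2
        rw [hx2 hx3, hy2 hy3, ← add_smul, hpq, one_smul]
  intro x hx
  have hsub : s ⊆ {x | φ x ≤ c ∧ (φ x = c → x = w)} := by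
    intro y hy
    exact ⟨hle y hy, heq y hy⟩
  have : x ∈ {x | φ x ≤ c ∧ (φ x = c → x = w)} := convexHull_min hsub hconv hx
  exact this.2

lemma half_lt {E : Type*} [AddCommGroup E] [Module ℝ E] {φ : E → ℝ} (hφ : AffFn φ)
    {s : Set E} {c : ℝ} (h : ∀ y ∈ s, φ y < c) :
    ∀ x ∈ convexHull ℝ s, φ x < c := by
  have hconv : Convex ℝ {x | φ x < c} := by
    intro x hx y hy p q hp hq hpq
    have := hφ p q x y hpq
    simp only [Set.mem_setOf_eq] at hx hy ⊢
    rw [this]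
    rcases eq_or_lt_of_le hp with hp0 | hp0
    · have hq1 : q = 1 := by linarith
      rw [← hp0, hq1]; simpa using hy
    rcases eq_or_lt_of_le hq with hq0 | hq0
    · have hp1 : p = 1 := by linarith
      rw [← hq0, hp1]; simpa using hx
    · exact comb_lt' hp0 hq0 hpq hx hy
  exact fun x hx => convexHull_min h hconv hx

/-- key membership lemma: if `w` is the unique maximizer of an affine functional `φ`
over `s`, and `U` is a bijection mapping `convexHull s` onto `convexHull s'`
whose inverse `W` is affine, then `U w ∈ s'`. -/
lemma mem_vertex {E : Type*} [AddCommGroup E] [Module ℝ E]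
    {U W : E → E} (hWU : ∀ x, W (U x) = x) (hUW : ∀ x, U (W x) = x)
    (hWaff : ∀ (p q : ℝ) (x y : E), p + q = 1 → W (p • x + q • y) = p • W x + q • W y)
    {s s' : Set E} (himg : U '' convexHull ℝ s = convexHull ℝ s')
    {φ : E → ℝ} (hφ : AffFn φ) {c : ℝ} {w : E} (hws : w ∈ s) (hwc : φ w = c)
    (hle : ∀ y ∈ s, φ y ≤ c) (heq : ∀ y ∈ s, φ y = c → y = w) :
    U w ∈ s' := by
  have hUwhull : U w ∈ convexHull ℝ s' := by
    rw [← himg]; exact Set.mem_image_of_mem U (subset_convexHull ℝ s hws)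
  have hWimg : W '' convexHull ℝ s' = convexHull ℝ s := by
    rw [← himg, ← Set.image_comp]
    have : (W ∘ U) = id := funext hWU
    rw [this, Set.image_id]
  have hWhull : ∀ y ∈ convexHull ℝ s', W y ∈ convexHull ℝ s := by
    intro y hy
    rw [← hWimg]; exact Set.mem_image_of_mem W hy
  have hφW : AffFn (φ ∘ W) := by
    intro p q x y hpq
    simp only [Function.comp_apply, hWaff p q x y hpq, hφ p q (W x) (W y) hpq]
  by_cases hex : ∃ y ∈ s', φ (W y) = c
  · obtain ⟨y, hy, hyc⟩ := hex
    have : W y = w := face_unique hφ hle heq (W y) (hWhull y (subset_convexHull ℝ s' hy)) hyc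
    have : U (W y) = U w := by rw [this]
    rw [hUW] at this
    rw [← this]; exact hy
  · push_neg at hex
    exfalso
    have hlt : ∀ y ∈ s', (φ ∘ W) y < c := by
      intro y hy
      have h1 : φ (W y) ≤ c := half_le hφ hle (W y) (hWhull y (subset_convexHull ℝ s' hy))
      exact lt_of_le_of_ne h1 (hex y hy)
    have := half_lt hφW hlt (U w) hUwhull
    simp only [Function.comp_apply, hWU] at this
    rw [hwc] at this
    exact lt_irrefl c this




/-- the affine map given by an integer matrix and offset, over ℝ -/
def UmapP (n : ℕ) (M : Matrix (Fin n) (Fin n) ℤ) (bb : Fin n → ℤ) :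
    (Fin n → ℝ) → (Fin n → ℝ) :=
  fun v => (M.map (Int.cast : ℤ → ℝ)).mulVec v + fun i => (bb i : ℝ)

def IsIntV (k : ℕ) (v : Fin k → ℝ) : Prop := ∀ i, ∃ z : ℤ, v i = (z : ℝ)

def embP (n : ℕ) (x : Fin 2 → ℝ) : Fin n → ℝ :=
  fun i => if (i : ℕ) = 0 then x 0 else if (i : ℕ) = 1 then x 1 else 0

def pr2 (n : ℕ) (v : Fin n → ℝ) : Fin 2 → ℝ :=
  fun l => if h : (l : ℕ) < n then v ⟨l, h⟩ else 0

lemma UmapP_affine3 (n : ℕ) (M : Matrix (Fin n) (Fin n) ℤ) (bb : Fin n → ℤ)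
    (c0 c1 c2 : ℝ) (v0 v1 v2 : Fin n → ℝ) (hc : c0 + c1 + c2 = 1) :
    UmapP n M bb (c0 • v0 + c1 • v1 + c2 • v2)
      = c0 • UmapP n M bb v0 + c1 • UmapP n M bb v1 + c2 • UmapP n M bb v2 := by
  unfold UmapP
  funext i
  simp only [Matrix.mulVec_add, Matrix.mulVec_smul, Pi.add_apply, Pi.smul_apply,
    smul_eq_mul]
  linear_combination (-(bb i : ℝ)) * hc

lemma UmapP_affine2 (n : ℕ) (M : Matrix (Fin n) (Fin n) ℤ) (bb : Fin n → ℤ)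
    (p q : ℝ) (x y : Fin n → ℝ) (hpq : p + q = 1) :
    UmapP n M bb (p • x + q • y) = p • UmapP n M bb x + q • UmapP n M bb y := by
  have := UmapP_affine3 n M bb p q 0 x y 0 (by linarith)
  simpa using this

/-- integer inverse matrix -/
def MinvP (n : ℕ) (M : Matrix (Fin n) (Fin n) ℤ) : Matrix (Fin n) (Fin n) ℤ :=
  M.det • M.adjugate

lemma MinvP_mul (n : ℕ) (M : Matrix (Fin n) (Fin n) ℤ) (hdet : M.det = 1 ∨ M.det = -1) :
    MinvP n M * M = 1 := by
  unfold MinvP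
  rw [Matrix.smul_mul, Matrix.adjugate_mul, smul_smul]
  rcases hdet with h | h <;> rw [h] <;> norm_num

lemma mul_MinvP (n : ℕ) (M : Matrix (Fin n) (Fin n) ℤ) (hdet : M.det = 1 ∨ M.det = -1) :
    M * MinvP n M = 1 := by
  unfold MinvP
  rw [Matrix.mul_smul, Matrix.mul_adjugate, smul_smul]
  rcases hdet with h | h <;> rw [h] <;> norm_num

def binvP (n : ℕ) (M : Matrix (Fin n) (Fin n) ℤ) (bb : Fin n → ℤ) : Fin n → ℤ :=
  -((MinvP n M).mulVec bb)

lemma cast_mulVec (n : ℕ) (M : Matrix (Fin n) (Fin n) ℤ) (v : Fin n → ℤ) (i : Fin n) :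
    ((M.map (Int.cast : ℤ → ℝ)).mulVec (fun j => (v j : ℝ))) i = ((M.mulVec v i : ℤ) : ℝ) := by
  simp [Matrix.mulVec, dotProduct, Matrix.map_apply]

lemma UmapP_left_inv (n : ℕ) (M : Matrix (Fin n) (Fin n) ℤ) (bb : Fin n → ℤ)
    (hdet : M.det = 1 ∨ M.det = -1) (x : Fin n → ℝ) :
    UmapP n (MinvP n M) (binvP n M bb) (UmapP n M bb x) = x := by
  unfold UmapP binvP
  have hcast : ((MinvP n M * M).map (Int.cast : ℤ → ℝ))
      = ((MinvP n M).map Int.cast) * (M.map Int.cast) := by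
    ext i j
    simp only [Matrix.map_apply, Matrix.mul_apply]
    push_cast
    ring
  have hmm : ((MinvP n M).map (Int.cast : ℤ → ℝ)) * (M.map (Int.cast : ℤ → ℝ)) = 1 := by
    rw [← hcast, MinvP_mul n M hdet]
    exact Matrix.map_one _ (by simp) (by simp)
  funext i
  simp only [Matrix.mulVec_add, Pi.add_apply]
  rw [Matrix.mulVec_mulVec, hmm, Matrix.one_mulVec]
  have hb := cast_mulVec n (MinvP n M) bb i
  rw [hb]
  simp only [Pi.neg_apply]
  push_cast
  ring



lemma isIntV_add {k : ℕ} {v w : Fin k → ℝ} (hv : IsIntV k v) (hw : IsIntV k w) :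
    IsIntV k (v + w) := by
  intro i
  obtain ⟨z1, h1⟩ := hv i
  obtain ⟨z2, h2⟩ := hw i
  exact ⟨z1 + z2, by simp [h1, h2]⟩

lemma isIntV_intsmul {k : ℕ} {r : ℝ} {v : Fin k → ℝ} (hr : ∃ z : ℤ, r = (z : ℝ))
    (hv : IsIntV k v) : IsIntV k (r • v) := by
  intro i
  obtain ⟨z1, h1⟩ := hr
  obtain ⟨z2, h2⟩ := hv i
  exact ⟨z1 * z2, by simp [h1, h2]⟩

lemma isIntV_zero {k : ℕ} : IsIntV k 0 := fun i => ⟨0, by simp⟩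

lemma UmapP_int (n : ℕ) (M : Matrix (Fin n) (Fin n) ℤ) (bb : Fin n → ℤ)
    {v : Fin n → ℝ} (hv : IsIntV n v) : IsIntV n (UmapP n M bb v) := by
  intro i
  choose z hz using hv
  refine ⟨(∑ j, M i j * z j) + bb i, ?_⟩
  unfold UmapP
  simp only [Pi.add_apply, Matrix.mulVec, dotProduct, Matrix.map_apply]
  push_cast
  congr 1
  exact Finset.sum_congr rfl fun j _ => by rw [hz j]

lemma pr2_int {n : ℕ} {v : Fin n → ℝ} (hv : IsIntV n v) : IsIntV 2 (pr2 n v) := by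
  intro l
  unfold pr2
  by_cases h : (l : ℕ) < n
  · simp only [h, dif_pos]
    exact hv _
  · simp only [h, dif_neg, not_false_iff]
    exact ⟨0, by simp⟩

lemma embP_int {n : ℕ} {x : Fin 2 → ℝ} (hx : IsIntV 2 x) : IsIntV n (embP n x) := by
  intro i
  unfold embP
  by_cases h0 : (i : ℕ) = 0
  · simp only [h0, if_pos]; exact hx 0
  by_cases h1 : (i : ℕ) = 1
  · simp only [h0, h1, if_neg, if_pos, not_false_iff]; exact hx 1
  · simp only [h0, h1, if_neg, not_false_iff]; exact ⟨0, by simp⟩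

lemma pr2_add {n : ℕ} (v w : Fin n → ℝ) : pr2 n (v + w) = pr2 n v + pr2 n w := by
  funext l
  unfold pr2
  by_cases h : (l : ℕ) < n <;> simp [h]

lemma pr2_smul {n : ℕ} (r : ℝ) (v : Fin n → ℝ) : pr2 n (r • v) = r • pr2 n v := by
  funext l
  unfold pr2
  by_cases h : (l : ℕ) < n <;> simp [h]

lemma planarPt_eq_embP (n : ℕ) (a b : ℤ) :
    planarPt n a b = embP n (fun l => if l = 0 then (a : ℝ) else (b : ℝ)) := by
  funext i
  unfold planarPt embP
  by_cases h0 : (i : ℕ) = 0 <;> by_cases h1 : (i : ℕ) = 1 <;> simp [h0, h1]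

lemma planarPt_zero (n : ℕ) : planarPt n 0 0 = 0 := by
  funext i
  unfold planarPt
  split <;> [skip; split] <;> simp

lemma pr2_embP {n : ℕ} (hn : 2 < n) (x : Fin 2 → ℝ) : pr2 n (embP n x) = x := by
  funext l
  unfold pr2 embP
  have hl : (l : ℕ) < 2 := l.isLt
  have h : (l : ℕ) < n := by omega
  rw [dif_pos h]
  have hl2 : (l : ℕ) = 0 ∨ (l : ℕ) = 1 := by omega
  rcases hl2 with h0 | h0
  · simp only [h0, if_pos]
    congr 1
    exact Fin.ext h0.symm
  · have : ((⟨(l : ℕ), h⟩ : Fin n) : ℕ) = 1 := h0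
    rw [if_neg (by omega), if_pos this]
    congr 1
    exact Fin.ext h0.symm

lemma pr2_planarPt {n : ℕ} (hn : 2 < n) (a b : ℤ) :
    pr2 n (planarPt n a b) = fun l => if l = 0 then (a : ℝ) else (b : ℝ) := by
  rw [planarPt_eq_embP, pr2_embP hn]

lemma pr2_single {n : ℕ} (k : Fin n) (hk : 2 ≤ (k : ℕ)) :
    pr2 n (Pi.single k (1 : ℝ)) = 0 := by
  funext l
  unfold pr2
  by_cases h : (l : ℕ) < n
  · rw [dif_pos h]
    have : (⟨(l : ℕ), h⟩ : Fin n) ≠ k := by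
      intro he
      have := congrArg Fin.val he
      simp at this
      omega
    simp [Pi.single_eq_of_ne this]
  · simp [h]

lemma image_hull_UmapP (n : ℕ) (M : Matrix (Fin n) (Fin n) ℤ) (bb : Fin n → ℤ)
    (s : Set (Fin n → ℝ)) :
    UmapP n M bb '' convexHull ℝ s = convexHull ℝ (UmapP n M bb '' s) := by
  let f : (Fin n → ℝ) →ᵃ[ℝ] (Fin n → ℝ) :=
    { toFun := UmapP n M bb
      linear := Matrix.mulVecLin (M.map (Int.cast : ℤ → ℝ))
      map_vadd' := by
        intro p v
        unfold UmapP
        simp only [Matrix.mulVecLin_apply, vadd_eq_add]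
        funext i
        simp [Matrix.mulVec_add]
        ring }
  exact f.image_convexHull s



section Gdefs
variable (a b c d : ℤ)

noncomputable def g1f (x : Fin 2 → ℝ) : ℝ :=
  ((d : ℝ) * x 0 - (c : ℝ) * x 1) / ((a : ℝ) * d - b * c)
noncomputable def g2f (x : Fin 2 → ℝ) : ℝ :=
  (-(b : ℝ) * x 0 + (a : ℝ) * x 1) / ((a : ℝ) * d - b * c)
noncomputable def g0f (x : Fin 2 → ℝ) : ℝ := 1 - g1f a b c d x - g2f a b c d x

noncomputable def Gf : Fin 3 → (Fin 2 → ℝ) → ℝ := ![g0f a b c d, g1f a b c d, g2f a b c d]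

end Gdefs

lemma Gf_sum (a b c d : ℤ) (x : Fin 2 → ℝ) :
    Gf a b c d 0 x + Gf a b c d 1 x + Gf a b c d 2 x = 1 := by
  simp [Gf, g0f]
  ring

section Evals
variable {n : ℕ} (hn : 2 < n)

lemma planarPt_app0 (A B : ℤ) : planarPt n A B ⟨0, by omega⟩ = (A : ℝ) := by
  simp [planarPt]

lemma planarPt_app1 (A B : ℤ) : planarPt n A B ⟨1, by omega⟩ = (B : ℝ) := by
  simp [planarPt]

lemma planarPt_appk (A B : ℤ) (k : Fin n) (hk : 2 ≤ (k : ℕ)) : planarPt n A B k = 0 := by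
  unfold planarPt
  rw [if_neg (by omega), if_neg (by omega)]

end Evals

/-- the three planar vertices of the pyramid are mapped into the vertex set -/
lemma verts_mem_image (a b c d a' b' c' d' : ℤ)
    (h1 : a * d - b * c ≠ 0)
    (n : ℕ) (hn : 2 < n) (U W : (Fin n → ℝ) → (Fin n → ℝ))
    (hWU : ∀ x, W (U x) = x) (hUW : ∀ x, U (W x) = x)
    (hWaff : ∀ (p q : ℝ) (x y : Fin n → ℝ), p + q = 1 → W (p • x + q • y) = p • W x + q • W y)
    (himg : U '' pyramid n a b c d = pyramid n a' b' c' d') :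
    U (planarPt n 0 0) ∈ pyramidVerts n a' b' c' d' ∧
    U (planarPt n a b) ∈ pyramidVerts n a' b' c' d' ∧
    U (planarPt n c d) ∈ pyramidVerts n a' b' c' d' := by
  have hm : ((a : ℝ) * d - b * c) ≠ 0 := by
    intro he
    apply h1
    exact_mod_cast he
  have hm2 : (d:ℝ)*a - b*c ≠ 0 := by contrapose! hm; linarith
  have hm3 : (d:ℝ)*a - c*b ≠ 0 := by contrapose! hm; linarith
  set i0 : Fin n := ⟨0, by omega⟩ with hi0
  set i1 : Fin n := ⟨1, by omega⟩ with hi1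
  have hs0 : ∀ k : Fin n, 2 ≤ (k : ℕ) → (Pi.single k (1 : ℝ) : Fin n → ℝ) i0 = 0 := by
    intro k hk
    apply Pi.single_eq_of_ne
    intro he
    have := congrArg Fin.val he
    rw [hi0] at this
    simp at this
    omega
  have hs1 : ∀ k : Fin n, 2 ≤ (k : ℕ) → (Pi.single k (1 : ℝ) : Fin n → ℝ) i1 = 0 := by
    intro k hk
    apply Pi.single_eq_of_ne
    intro he
    have := congrArg Fin.val he
    rw [hi1] at this
    simp at this
    omega
  -- membership elimination for pyramidVerts
  have hmem : ∀ y ∈ pyramidVerts n a b c d,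
      y = planarPt n 0 0 ∨ y = planarPt n a b ∨ y = planarPt n c d ∨
        ∃ k : Fin n, 2 ≤ (k : ℕ) ∧ y = Pi.single k 1 := by
    intro y hy
    rcases hy with hy | hy
    · rcases hy with hy | hy | hy
      · exact Or.inl hy
      · exact Or.inr (Or.inl hy)
      · exact Or.inr (Or.inr (Or.inl hy))
    · obtain ⟨k, hk, hy⟩ := hy
      exact Or.inr (Or.inr (Or.inr ⟨k, hk, hy⟩))
  have hw0 : planarPt n 0 0 ∈ pyramidVerts n a b c d := Or.inl (Or.inl rfl)
  have hw1 : planarPt n a b ∈ pyramidVerts n a b c d := Or.inl (Or.inr (Or.inl rfl))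
  have hw2 : planarPt n c d ∈ pyramidVerts n a b c d := Or.inl (Or.inr (Or.inr rfl))
  refine ⟨?_, ?_, ?_⟩
  · -- w = 0, functional φ0
    set F : Finset (Fin n) := Finset.univ.filter (fun k : Fin n => 2 ≤ (k : ℕ)) with hF
    set φ : (Fin n → ℝ) → ℝ := fun v =>
      -(((d : ℝ) - b) * v i0 + ((a : ℝ) - c) * v i1) / ((a : ℝ) * d - b * c)
        - ∑ k ∈ F, v k with hφ
    have hφaff : AffFn φ := by
      intro p q x y hpq
      have hsum : ∑ k ∈ F, (p * x k + q * y k) = p * ∑ k ∈ F, x k + q * ∑ k ∈ F, y k := by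
        rw [Finset.sum_add_distrib, Finset.mul_sum, Finset.mul_sum]
      simp only [hφ, Pi.add_apply, Pi.smul_apply, smul_eq_mul]
      rw [hsum]
      field_simp
      ring
    have hsum_planar : ∀ A B : ℤ, ∑ k ∈ F, planarPt n A B k = 0 := by
      intro A B
      apply Finset.sum_eq_zero
      intro k hk
      rw [hF] at hk
      simp only [Finset.mem_filter] at hk
      exact planarPt_appk A B k hk.2
    have hsum_single : ∀ k : Fin n, 2 ≤ (k : ℕ) → ∑ j ∈ F, Pi.single k (1 : ℝ) j = 1 := by
      intro k hk
      rw [Finset.sum_eq_single_of_mem k]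
      · exact Pi.single_eq_same k 1
      · rw [hF]; simp [hk]
      · intro j _ hj
        exact Pi.single_eq_of_ne hj 1
    have hval0 : φ (planarPt n 0 0) = 0 := by
      rw [hφ]
      simp only []
      rw [hsum_planar]
      rw [planarPt_app0 hn, planarPt_app1 hn]
      simp
    have hval1 : φ (planarPt n a b) = -1 := by
      rw [hφ]
      simp only []
      rw [hsum_planar, planarPt_app0 hn, planarPt_app1 hn]
      field_simp
      ring
    have hval2 : φ (planarPt n c d) = -1 := by
      rw [hφ]
      simp only []
      rw [hsum_planar, planarPt_app0 hn, planarPt_app1 hn]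
      field_simp
      ring
    have hvale : ∀ k : Fin n, 2 ≤ (k : ℕ) → φ (Pi.single k 1) = -1 := by
      intro k hk
      rw [hφ]
      simp only []
      rw [hsum_single k hk, hs0 k hk, hs1 k hk]
      simp
    apply mem_vertex hWU hUW hWaff himg hφaff hw0 hval0
    · intro y hy
      rcases hmem y hy with rfl | rfl | rfl | ⟨k, hk, rfl⟩
      · rw [hval0]
      · rw [hval1]; norm_num
      · rw [hval2]; norm_num
      · rw [hvale k hk]; norm_num
    · intro y hy hyc
      rcases hmem y hy with rfl | rfl | rfl | ⟨k, hk, rfl⟩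
      · rfl
      · rw [hval1] at hyc; norm_num at hyc
      · rw [hval2] at hyc; norm_num at hyc
      · rw [hvale k hk] at hyc; norm_num at hyc
  · -- w = (a,b), functional g1
    set φ : (Fin n → ℝ) → ℝ := fun v =>
      ((d : ℝ) * v i0 - (c : ℝ) * v i1) / ((a : ℝ) * d - b * c) with hφ
    have hφaff : AffFn φ := by
      intro p q x y hpq
      simp only [hφ, Pi.add_apply, Pi.smul_apply, smul_eq_mul]
      field_simp
      ring
    have hval0 : φ (planarPt n 0 0) = 0 := by
      rw [hφ]; simp only []; rw [planarPt_app0 hn, planarPt_app1 hn]; simp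
    have hval1 : φ (planarPt n a b) = 1 := by
      rw [hφ]; simp only []; rw [planarPt_app0 hn, planarPt_app1 hn]
      field_simp
    have hval2 : φ (planarPt n c d) = 0 := by
      rw [hφ]; simp only []; rw [planarPt_app0 hn, planarPt_app1 hn]
      field_simp; ring
    have hvale : ∀ k : Fin n, 2 ≤ (k : ℕ) → φ (Pi.single k 1) = 0 := by
      intro k hk
      rw [hφ]; simp only []; rw [hs0 k hk, hs1 k hk]; simp
    apply mem_vertex hWU hUW hWaff himg hφaff hw1 hval1
    · intro y hy
      rcases hmem y hy with rfl | rfl | rfl | ⟨k, hk, rfl⟩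
      · rw [hval0]; norm_num
      · rw [hval1]
      · rw [hval2]; norm_num
      · rw [hvale k hk]; norm_num
    · intro y hy hyc
      rcases hmem y hy with rfl | rfl | rfl | ⟨k, hk, rfl⟩
      · rw [hval0] at hyc; norm_num at hyc
      · rfl
      · rw [hval2] at hyc; norm_num at hyc
      · rw [hvale k hk] at hyc; norm_num at hyc
  · -- w = (c,d), functional g2
    set φ : (Fin n → ℝ) → ℝ := fun v =>
      (-(b : ℝ) * v i0 + (a : ℝ) * v i1) / ((a : ℝ) * d - b * c) with hφ
    have hφaff : AffFn φ := by
      intro p q x y hpq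
      simp only [hφ, Pi.add_apply, Pi.smul_apply, smul_eq_mul]
      field_simp
      ring
    have hval0 : φ (planarPt n 0 0) = 0 := by
      rw [hφ]; simp only []; rw [planarPt_app0 hn, planarPt_app1 hn]; simp
    have hval1 : φ (planarPt n a b) = 0 := by
      rw [hφ]; simp only []; rw [planarPt_app0 hn, planarPt_app1 hn]
      field_simp; ring
    have hval2 : φ (planarPt n c d) = 1 := by
      rw [hφ]; simp only []; rw [planarPt_app0 hn, planarPt_app1 hn]
      field_simp; ring
    have hvale : ∀ k : Fin n, 2 ≤ (k : ℕ) → φ (Pi.single k 1) = 0 := by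
      intro k hk
      rw [hφ]; simp only []; rw [hs0 k hk, hs1 k hk]; simp
    apply mem_vertex hWU hUW hWaff himg hφaff hw2 hval2
    · intro y hy
      rcases hmem y hy with rfl | rfl | rfl | ⟨k, hk, rfl⟩
      · rw [hval0]; norm_num
      · rw [hval1]; norm_num
      · rw [hval2]
      · rw [hvale k hk]; norm_num
    · intro y hy hyc
      rcases hmem y hy with rfl | rfl | rfl | ⟨k, hk, rfl⟩
      · rw [hval0] at hyc; norm_num at hyc
      · rw [hval1] at hyc; norm_num at hyc
      · rfl
      · rw [hvale k hk] at hyc; norm_num at hyc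

def castV (t : Fin 2 → ℤ) : Fin 2 → ℝ := fun l => (t l : ℝ)

def tripZ (a' b' c' d' : ℤ) : Fin 3 → Fin 2 → ℤ := ![![0, 0], ![a', b'], ![c', d']]

lemma castV_int (t : Fin 2 → ℤ) : IsIntV 2 (castV t) := fun l => ⟨t l, rfl⟩

lemma fin3_cases (j : Fin 3) : j = 0 ∨ j = 1 ∨ j = 2 := by revert j; decide
lemma fin2_cases (j : Fin 2) : j = 0 ∨ j = 1 := by revert j; decide

lemma third_elt (r1 r2 : Fin 3) (h : r1 ≠ r2) :
    ∃ r3, r3 ≠ r1 ∧ r3 ≠ r2 ∧ ∀ r, r = r1 ∨ r = r2 ∨ r = r3 := by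
  revert h; revert r1 r2; decide

lemma other2_elt (r : Fin 3) : ∃ s t, s ≠ t ∧ s ≠ r ∧ t ≠ r := by
  revert r; decide

lemma castV_tripZ_0 (n : ℕ) (a' b' c' d' : ℤ) :
    embP n (castV (tripZ a' b' c' d' 0)) = planarPt n 0 0 := by
  funext i
  unfold embP castV tripZ planarPt
  by_cases h0 : (i : ℕ) = 0 <;> by_cases h1 : (i : ℕ) = 1 <;> simp [h0, h1]

lemma castV_tripZ_1 (n : ℕ) (a' b' c' d' : ℤ) :
    embP n (castV (tripZ a' b' c' d' 1)) = planarPt n a' b' := by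
  funext i
  unfold embP castV tripZ planarPt
  by_cases h0 : (i : ℕ) = 0 <;> by_cases h1 : (i : ℕ) = 1 <;> simp [h0, h1]

lemma castV_tripZ_2 (n : ℕ) (a' b' c' d' : ℤ) :
    embP n (castV (tripZ a' b' c' d' 2)) = planarPt n c' d' := by
  funext i
  unfold embP castV tripZ planarPt
  by_cases h0 : (i : ℕ) = 0 <;> by_cases h1 : (i : ℕ) = 1 <;> simp [h0, h1]

lemma tripZ_real_inj (a' b' c' d' : ℤ) (h2 : a' * d' - b' * c' ≠ 0) {n : ℕ} (hn : 2 < n) :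
    Function.Injective (fun r => embP n (castV (tripZ a' b' c' d' r))) := by
  intro r s h
  simp only at h
  have h0 : castV (tripZ a' b' c' d' r) = castV (tripZ a' b' c' d' s) := by
    have := congrArg (pr2 n) h
    rwa [pr2_embP hn, pr2_embP hn] at this
  have hz : tripZ a' b' c' d' r = tripZ a' b' c' d' s := by
    funext l
    have := congrFun h0 l
    simp only [castV] at this
    exact_mod_cast this
  clear h h0
  rcases fin3_cases r with rfl | rfl | rfl <;> rcases fin3_cases s with rfl | rfl | rfl <;>
    first
    | rfl
    | (exfalso
       apply h2
       have e0 := congrFun hz 0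
       have e1 := congrFun hz 1
       simp [tripZ] at e0 e1
       first
       | linear_combination (d' : ℤ) * e0 - c' * e1
       | linear_combination (-d' : ℤ) * e0 + c' * e1
       | linear_combination (b' : ℤ) * e0 - a' * e1
       | linear_combination (-b' : ℤ) * e0 + a' * e1
       | linear_combination (d' - b') * e0 + (a' - c') * e1
       | linear_combination (b' - d') * e0 + (c' - a') * e1)

lemma triple_set_eq {X : Type*} (σ : Fin 3 → Fin 3) (hσ : Function.Injective σ)
    (v : Fin 3 → X) : ({v (σ 0), v (σ 1), v (σ 2)} : Set X) = {v 0, v 1, v 2} := by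
  have hsurj : Function.Surjective σ := Finite.injective_iff_surjective.mp hσ
  ext x
  simp only [Set.mem_insert_iff, Set.mem_singleton_iff]
  constructor
  · rintro (rfl | rfl | rfl)
    · rcases fin3_cases (σ 0) with h | h | h <;> rw [h] <;> tauto
    · rcases fin3_cases (σ 1) with h | h | h <;> rw [h] <;> tauto
    · rcases fin3_cases (σ 2) with h | h | h <;> rw [h] <;> tauto
  · have key : ∀ j : Fin 3, v j = v (σ 0) ∨ v j = v (σ 1) ∨ v j = v (σ 2) := by
      intro j
      obtain ⟨i, rfl⟩ := hsurj j
      rcases fin3_cases i with rfl | rfl | rfl <;> tauto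
    rintro (rfl | rfl | rfl)
    · exact key 0
    · exact key 1
    · exact key 2

lemma trip_det (a' b' c' d' : ℤ) (σ : Fin 3 → Fin 3) (hσ : Function.Injective σ) :
    ∃ ε : ℤ, (ε = 1 ∨ ε = -1) ∧
      (tripZ a' b' c' d' (σ 1) 0 - tripZ a' b' c' d' (σ 0) 0) *
        (tripZ a' b' c' d' (σ 2) 1 - tripZ a' b' c' d' (σ 0) 1) -
      (tripZ a' b' c' d' (σ 1) 1 - tripZ a' b' c' d' (σ 0) 1) *
        (tripZ a' b' c' d' (σ 2) 0 - tripZ a' b' c' d' (σ 0) 0)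
      = ε * (a' * d' - b' * c') := by
  rcases fin3_cases (σ 0) with e0 | e0 | e0 <;>
  rcases fin3_cases (σ 1) with e1 | e1 | e1 <;>
  rcases fin3_cases (σ 2) with e2 | e2 | e2 <;>
    rw [e0, e1, e2] <;>
    first
    | exact absurd (hσ (e0.trans e1.symm)) (by decide)
    | exact absurd (hσ (e0.trans e2.symm)) (by decide)
    | exact absurd (hσ (e1.trans e2.symm)) (by decide)
    | (refine ⟨1, Or.inl rfl, ?_⟩
       simp only [tripZ, Matrix.cons_val_zero, Matrix.cons_val_one, Matrix.head_cons,
         Matrix.cons_val_two, Matrix.tail_cons]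
       ring1)
    | (refine ⟨-1, Or.inr rfl, ?_⟩
       simp only [tripZ, Matrix.cons_val_zero, Matrix.cons_val_one, Matrix.head_cons,
         Matrix.cons_val_two, Matrix.tail_cons]
       ring1)

lemma embP_appk {n : ℕ} (x : Fin 2 → ℝ) (k : Fin n) (hk : 2 ≤ (k : ℕ)) :
    embP n x k = 0 := by
  unfold embP
  rw [if_neg (by omega), if_neg (by omega)]

lemma planarPt2_app0 (A B : ℤ) : planarPt 2 A B 0 = (A : ℝ) := by simp [planarPt]
lemma planarPt2_app1 (A B : ℤ) : planarPt 2 A B 1 = (B : ℝ) := by simp [planarPt]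

lemma e2_app {j l : Fin 2} : (Pi.single j (1:ℝ) : Fin 2 → ℝ) l = if l = j then 1 else 0 := by
  by_cases h : l = j
  · subst h; simp
  · simp [Pi.single_eq_of_ne h, h]

lemma emb_comb (a b c d : ℤ) (h1 : a * d - b * c ≠ 0) (n : ℕ) (hn : 2 < n)
    (x : Fin 2 → ℝ) :
    embP n x = g0f a b c d x • planarPt n 0 0 + g1f a b c d x • planarPt n a b
      + g2f a b c d x • planarPt n c d := by
  have hm : ((a : ℝ) * d - b * c) ≠ 0 := by
    intro he; apply h1; exact_mod_cast he
  have hm2 : (d:ℝ)*a - b*c ≠ 0 := by contrapose! hm; linarith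
  have hm3 : (d:ℝ)*a - c*b ≠ 0 := by contrapose! hm; linarith
  funext i
  simp only [Pi.add_apply, Pi.smul_apply, smul_eq_mul]
  unfold embP planarPt g0f g1f g2f
  by_cases h0 : (i : ℕ) = 0
  · simp only [h0, if_pos]
    field_simp
    ring
  · by_cases hi1 : (i : ℕ) = 1
    · rw [if_neg h0, if_pos hi1, if_neg h0, if_pos hi1, if_neg h0, if_pos hi1,
        if_neg h0, if_pos hi1]
      field_simp
      ring
    · rw [if_neg h0, if_neg hi1, if_neg h0, if_neg hi1, if_neg h0, if_neg hi1,
        if_neg h0, if_neg hi1]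
      ring

/-- From an integer triple assignment with integral transition data, build the 2D package. -/
lemma PK2 (a b c d a' b' c' d' : ℤ) (h1 : a * d - b * c ≠ 0)
    (t : Fin 3 → Fin 2 → ℤ)
    (hset : ({castV (t 0), castV (t 1), castV (t 2)} : Set (Fin 2 → ℝ))
      = {planarPt 2 0 0, planarPt 2 a' b', planarPt 2 c' d'})
    (hdet' : ∃ ε : ℤ, (ε = 1 ∨ ε = -1) ∧
      (t 1 0 - t 0 0) * (t 2 1 - t 0 1) - (t 1 1 - t 0 1) * (t 2 0 - t 0 0)
        = ε * (a' * d' - b' * c'))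
    (hF : ∀ j : Fin 2, IsIntV 2 (g0f a b c d (Pi.single j 1) • castV (t 0)
      + g1f a b c d (Pi.single j 1) • castV (t 1)
      + g2f a b c d (Pi.single j 1) • castV (t 2))) :
    ∃ (B : Matrix (Fin 2) (Fin 2) ℤ) (s : Fin 2 → ℤ) (ε : ℤ), (ε = 1 ∨ ε = -1) ∧
      B.det * (a * d - b * c) = ε * (a' * d' - b' * c') ∧
      UmapP 2 B s '' {planarPt 2 0 0, planarPt 2 a b, planarPt 2 c d}
        = {planarPt 2 0 0, planarPt 2 a' b', planarPt 2 c' d'} := by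
  have hm : ((a : ℝ) * d - b * c) ≠ 0 := by
    intro he; apply h1; exact_mod_cast he
  have hm2 : (d:ℝ)*a - b*c ≠ 0 := by contrapose! hm; linarith
  have hm3 : (d:ℝ)*a - c*b ≠ 0 := by contrapose! hm; linarith
  have h0 := hF 0
  have h1' := hF 1
  choose k0 hk0 using h0
  choose k1 hk1 using h1'
  -- scalar versions of hk0 / hk1
  have hk0' : ∀ i : Fin 2, g0f a b c d (Pi.single 0 1) * (t 0 i : ℝ)
      + g1f a b c d (Pi.single 0 1) * (t 1 i : ℝ)
      + g2f a b c d (Pi.single 0 1) * (t 2 i : ℝ) = (k0 i : ℝ) := by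
    intro i
    have := hk0 i
    simpa [castV, Pi.add_apply, Pi.smul_apply, smul_eq_mul] using this
  have hk1' : ∀ i : Fin 2, g0f a b c d (Pi.single 1 1) * (t 0 i : ℝ)
      + g1f a b c d (Pi.single 1 1) * (t 1 i : ℝ)
      + g2f a b c d (Pi.single 1 1) * (t 2 i : ℝ) = (k1 i : ℝ) := by
    intro i
    have := hk1 i
    simpa [castV, Pi.add_apply, Pi.smul_apply, smul_eq_mul] using this
  set B : Matrix (Fin 2) (Fin 2) ℤ :=
    Matrix.of (fun i j : Fin 2 => (if j = 0 then k0 i else k1 i) - t 0 i) with hB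
  have hB0 : ∀ i : Fin 2, ((B i 0 : ℤ) : ℝ) = (k0 i : ℝ) - (t 0 i : ℝ) := by
    intro i; rw [hB]; simp [Matrix.of_apply]
  have hB1 : ∀ i : Fin 2, ((B i 1 : ℤ) : ℝ) = (k1 i : ℝ) - (t 0 i : ℝ) := by
    intro i; rw [hB]; simp [Matrix.of_apply]
  -- key: the map in scalar form
  have hmv : ∀ (x : Fin 2 → ℝ) (i : Fin 2),
      (B.map (Int.cast : ℤ → ℝ)).mulVec x i
        = (g0f a b c d x * (t 0 i : ℝ) + g1f a b c d x * (t 1 i : ℝ)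
            + g2f a b c d x * (t 2 i : ℝ)) - (t 0 i : ℝ) := by
    intro x i
    have hexp : (B.map (Int.cast : ℤ → ℝ)).mulVec x i
        = ((B i 0 : ℤ) : ℝ) * x 0 + ((B i 1 : ℤ) : ℝ) * x 1 := by
      simp [Matrix.mulVec, dotProduct, Fin.sum_univ_two, Matrix.map_apply]
    rw [hexp, hB0, hB1, ← hk0' i, ← hk1' i]
    unfold g0f g1f g2f
    rw [e2_app, e2_app, e2_app, e2_app]
    norm_num
    field_simp
    ring
  -- images of the three vertices
  have hU0 : UmapP 2 B (t 0) (planarPt 2 0 0) = castV (t 0) := by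
    unfold UmapP
    rw [planarPt_zero]
    rw [Matrix.mulVec_zero]
    funext i
    simp [castV]
  have hval1 : g1f a b c d (planarPt 2 a b) = 1 := by
    unfold g1f
    rw [planarPt2_app0, planarPt2_app1]
    field_simp
  have hval2 : g2f a b c d (planarPt 2 a b) = 0 := by
    unfold g2f
    rw [planarPt2_app0, planarPt2_app1]
    field_simp
    ring
  have hval1' : g1f a b c d (planarPt 2 c d) = 0 := by
    unfold g1f
    rw [planarPt2_app0, planarPt2_app1]
    field_simp
    ring
  have hval2' : g2f a b c d (planarPt 2 c d) = 1 := by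
    unfold g2f
    rw [planarPt2_app0, planarPt2_app1]
    field_simp
    ring
  have hU1 : UmapP 2 B (t 0) (planarPt 2 a b) = castV (t 1) := by
    unfold UmapP
    funext i
    simp only [Pi.add_apply]
    rw [hmv (planarPt 2 a b) i]
    unfold g0f
    rw [hval1, hval2]
    simp [castV]
  have hU2 : UmapP 2 B (t 0) (planarPt 2 c d) = castV (t 2) := by
    unfold UmapP
    funext i
    simp only [Pi.add_apply]
    rw [hmv (planarPt 2 c d) i]
    unfold g0f
    rw [hval1', hval2']
    simp [castV]
  -- integer linear equations
  have hE1 : ∀ i : Fin 2, B i 0 * a + B i 1 * b = t 1 i - t 0 i := by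
    intro i
    have hr := hmv (planarPt 2 a b) i
    unfold g0f at hr
    rw [hval1, hval2] at hr
    have hexp : (B.map (Int.cast : ℤ → ℝ)).mulVec (planarPt 2 a b) i
        = ((B i 0 : ℤ) : ℝ) * (a : ℝ) + ((B i 1 : ℤ) : ℝ) * (b : ℝ) := by
      simp [Matrix.mulVec, dotProduct, Fin.sum_univ_two, Matrix.map_apply,
        planarPt2_app0, planarPt2_app1]
    rw [hexp] at hr
    have : ((B i 0 : ℤ) : ℝ) * (a : ℝ) + ((B i 1 : ℤ) : ℝ) * (b : ℝ)
        = (t 1 i : ℝ) - (t 0 i : ℝ) := by rw [hr]; ring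
    exact_mod_cast this
  have hE2 : ∀ i : Fin 2, B i 0 * c + B i 1 * d = t 2 i - t 0 i := by
    intro i
    have hr := hmv (planarPt 2 c d) i
    unfold g0f at hr
    rw [hval1', hval2'] at hr
    have hexp : (B.map (Int.cast : ℤ → ℝ)).mulVec (planarPt 2 c d) i
        = ((B i 0 : ℤ) : ℝ) * (c : ℝ) + ((B i 1 : ℤ) : ℝ) * (d : ℝ) := by
      simp [Matrix.mulVec, dotProduct, Fin.sum_univ_two, Matrix.map_apply,
        planarPt2_app0, planarPt2_app1]
    rw [hexp] at hr
    have : ((B i 0 : ℤ) : ℝ) * (c : ℝ) + ((B i 1 : ℤ) : ℝ) * (d : ℝ)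
        = (t 2 i : ℝ) - (t 0 i : ℝ) := by rw [hr]; ring
    exact_mod_cast this
  obtain ⟨ε, hε, hdeq⟩ := hdet'
  refine ⟨B, t 0, ε, hε, ?_, ?_⟩
  · rw [Matrix.det_fin_two, ← hdeq]
    have E10 := hE1 0
    have E11 := hE1 1
    have E20 := hE2 0
    have E21 := hE2 1
    linear_combination (B 1 0 * c + B 1 1 * d) * E10 + (t 1 0 - t 0 0) * E21
      - (B 0 0 * c + B 0 1 * d) * E11 - (t 1 1 - t 0 1) * E20
  · rw [Set.image_insert_eq, Set.image_insert_eq, Set.image_singleton,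
      hU0, hU1, hU2, hset]

lemma embP_two (x : Fin 2 → ℝ) : embP 2 x = x := by
  funext l
  rcases fin2_cases l with rfl | rfl <;> simp [embP]

lemma single_int (j : Fin 2) : IsIntV 2 (Pi.single j (1 : ℝ)) := by
  intro l
  rw [e2_app]
  by_cases h : l = j
  · exact ⟨1, by simp [h]⟩
  · exact ⟨0, by simp [h]⟩

lemma vec3_inj (s0 s1 s2 : Fin 3) (h01 : s0 ≠ s1) (h02 : s0 ≠ s2) (h12 : s1 ≠ s2) :
    Function.Injective ![s0, s1, s2] := by
  intro x y h
  fin_cases x <;> fin_cases y <;> simp_all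

/-- The heart of the argument: given the vertex images and the barycentric identity,
produce the 2D package. -/
lemma FINISH (a b c d a' b' c' d' : ℤ) (h1 : a * d - b * c ≠ 0)
    (h2 : a' * d' - b' * c' ≠ 0) (n : ℕ) (hn : 2 < n)
    (M : Matrix (Fin n) (Fin n) ℤ) (bb : Fin n → ℤ)
    (y : Fin 3 → (Fin n → ℝ))
    (hstar : ∀ x : Fin 2 → ℝ, UmapP n M bb (embP n x)
      = g0f a b c d x • y 0 + g1f a b c d x • y 1 + g2f a b c d x • y 2)
    (hyinj : Function.Injective y)
    (hy : ∀ i, (∃ r : Fin 3, y i = embP n (castV (tripZ a' b' c' d' r))) ∨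
               (∃ k : Fin n, 2 ≤ (k : ℕ) ∧ y i = Pi.single k 1)) :
    ∃ (B : Matrix (Fin 2) (Fin 2) ℤ) (s : Fin 2 → ℤ) (ε : ℤ), (ε = 1 ∨ ε = -1) ∧
      B.det * (a * d - b * c) = ε * (a' * d' - b' * c') ∧
      UmapP 2 B s '' {planarPt 2 0 0, planarPt 2 a b, planarPt 2 c d}
        = {planarPt 2 0 0, planarPt 2 a' b', planarPt 2 c' d'} := by
  -- step 1: build an injective assignment σ compatible with the planar vertices
  have hsig : ∃ σ : Fin 3 → Fin 3, Function.Injective σ ∧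
      ∀ i, (y i = embP n (castV (tripZ a' b' c' d' (σ i)))) ∨
           (∃ k : Fin n, 2 ≤ (k : ℕ) ∧ y i = Pi.single k 1) := by
    have hrne : ∀ (i j : Fin 3) (ri rj : Fin 3),
        i ≠ j → y i = embP n (castV (tripZ a' b' c' d' ri)) →
        y j = embP n (castV (tripZ a' b' c' d' rj)) → ri ≠ rj := by
      intro i j ri rj hij hyi hyj hr
      apply hij
      apply hyinj
      rw [hyi, hyj, hr]
    rcases hy 0 with ⟨r0, hp0⟩ | he0 <;> rcases hy 1 with ⟨r1, hp1⟩ | he1 <;>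
      rcases hy 2 with ⟨r2, hp2⟩ | he2
    · -- PPP
      have h01 := hrne 0 1 r0 r1 (by decide) hp0 hp1
      have h02 := hrne 0 2 r0 r2 (by decide) hp0 hp2
      have h12 := hrne 1 2 r1 r2 (by decide) hp1 hp2
      refine ⟨![r0, r1, r2], vec3_inj _ _ _ h01 h02 h12, ?_⟩
      intro i
      rcases fin3_cases i with rfl | rfl | rfl
      · exact Or.inl hp0
      · exact Or.inl hp1
      · exact Or.inl hp2
    · -- PPE
      have h01 := hrne 0 1 r0 r1 (by decide) hp0 hp1
      obtain ⟨r3, h30, h31, -⟩ := third_elt r0 r1 h01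
      refine ⟨![r0, r1, r3], vec3_inj _ _ _ h01 (Ne.symm h30) (Ne.symm h31), ?_⟩
      intro i
      rcases fin3_cases i with rfl | rfl | rfl
      · exact Or.inl hp0
      · exact Or.inl hp1
      · exact Or.inr he2
    · -- PEP
      have h02 := hrne 0 2 r0 r2 (by decide) hp0 hp2
      obtain ⟨r3, h30, h32, -⟩ := third_elt r0 r2 h02
      refine ⟨![r0, r3, r2], vec3_inj _ _ _ (Ne.symm h30) h02 h32, ?_⟩
      intro i
      rcases fin3_cases i with rfl | rfl | rfl
      · exact Or.inl hp0
      · exact Or.inr he1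
      · exact Or.inl hp2
    · -- PEE
      obtain ⟨s, u, hsu, hs0, hu0⟩ := other2_elt r0
      refine ⟨![r0, s, u], vec3_inj _ _ _ (Ne.symm hs0) (Ne.symm hu0) hsu, ?_⟩
      intro i
      rcases fin3_cases i with rfl | rfl | rfl
      · exact Or.inl hp0
      · exact Or.inr he1
      · exact Or.inr he2
    · -- EPP
      have h12 := hrne 1 2 r1 r2 (by decide) hp1 hp2
      obtain ⟨r3, h31, h32, -⟩ := third_elt r1 r2 h12
      refine ⟨![r3, r1, r2], vec3_inj _ _ _ h31 h32 h12, ?_⟩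
      intro i
      rcases fin3_cases i with rfl | rfl | rfl
      · exact Or.inr he0
      · exact Or.inl hp1
      · exact Or.inl hp2
    · -- EPE
      obtain ⟨s, u, hsu, hs1, hu1⟩ := other2_elt r1
      refine ⟨![s, r1, u], vec3_inj _ _ _ hs1 hsu (Ne.symm hu1), ?_⟩
      intro i
      rcases fin3_cases i with rfl | rfl | rfl
      · exact Or.inr he0
      · exact Or.inl hp1
      · exact Or.inr he2
    · -- EEP
      obtain ⟨s, u, hsu, hs2, hu2⟩ := other2_elt r2
      refine ⟨![s, u, r2], vec3_inj _ _ _ hsu hs2 hu2, ?_⟩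
      intro i
      rcases fin3_cases i with rfl | rfl | rfl
      · exact Or.inr he0
      · exact Or.inr he1
      · exact Or.inl hp2
    · -- EEE
      refine ⟨![0, 1, 2], by decide, ?_⟩
      intro i
      rcases fin3_cases i with rfl | rfl | rfl
      · exact Or.inr he0
      · exact Or.inr he1
      · exact Or.inr he2
  obtain ⟨σ, hσ, hcomp⟩ := hsig
  -- step 2: integrality of the g-coefficients at e-type positions
  have hcoordval : ∀ (i : Fin 3) (k : Fin n), 2 ≤ (k : ℕ) → y i = Pi.single k 1 →
      ∀ x : Fin 2 → ℝ, (g0f a b c d x • y 0 + g1f a b c d x • y 1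
        + g2f a b c d x • y 2) k
        = (if i = 0 then g0f a b c d x else if i = 1 then g1f a b c d x
           else g2f a b c d x) := by
    intro i k hk hyi x
    have hyk : ∀ j : Fin 3, j ≠ i → y j k = 0 := by
      intro j hj
      rcases hcomp j with hpl | ⟨k', hk', hsing⟩
      · rw [hpl]
        exact embP_appk _ k hk
      · rw [hsing]
        apply Pi.single_eq_of_ne
        intro hke
        apply hj
        apply hyinj
        rw [hsing, hyi, hke]
    simp only [Pi.add_apply, Pi.smul_apply, smul_eq_mul]
    rcases fin3_cases i with rfl | rfl | rfl
    · rw [hyi, Pi.single_eq_same, hyk 1 (by decide), hyk 2 (by decide)]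
      norm_num
    · rw [hyi, Pi.single_eq_same, hyk 0 (by decide), hyk 2 (by decide)]
      norm_num
    · rw [hyi, Pi.single_eq_same, hyk 0 (by decide), hyk 1 (by decide),
        if_neg (by decide : ¬(2:Fin 3) = 0), if_neg (by decide : ¬(2:Fin 3) = 1)]
      norm_num
  have hgint : ∀ (i : Fin 3), (∃ k : Fin n, 2 ≤ (k : ℕ) ∧ y i = Pi.single k 1) →
      ∀ x : Fin 2 → ℝ, IsIntV 2 x →
      ∃ z : ℤ, (if i = 0 then g0f a b c d x else if i = 1 then g1f a b c d x
                else g2f a b c d x) = (z : ℝ) := by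
    rintro i ⟨k, hk, hyi⟩ x hx
    have hint : IsIntV n (UmapP n M bb (embP n x)) :=
      UmapP_int n M bb (embP_int hx)
    obtain ⟨z, hz⟩ := hint k
    refine ⟨z, ?_⟩
    rw [← hcoordval i k hk hyi x, ← hstar x, hz]
  -- step 3: integrality of the F-values
  have hFint : ∀ x : Fin 2 → ℝ, IsIntV 2 x →
      IsIntV 2 (g0f a b c d x • castV (tripZ a' b' c' d' (σ 0))
        + g1f a b c d x • castV (tripZ a' b' c' d' (σ 1))
        + g2f a b c d x • castV (tripZ a' b' c' d' (σ 2))) := by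
    intro x hx
    have hδ : ∀ i : Fin 3, ∃ δ : Fin 2 → ℝ,
        (if i = 0 then g0f a b c d x else if i = 1 then g1f a b c d x
         else g2f a b c d x) • castV (tripZ a' b' c' d' (σ i))
        = (if i = 0 then g0f a b c d x else if i = 1 then g1f a b c d x
           else g2f a b c d x) • pr2 n (y i) + δ ∧ IsIntV 2 δ := by
      intro i
      rcases hcomp i with hpl | hee
      · refine ⟨0, ?_, isIntV_zero⟩
        rw [hpl, pr2_embP hn, add_zero]
      · obtain ⟨k, hk, hsing⟩ := hee
        refine ⟨(if i = 0 then g0f a b c d x else if i = 1 then g1f a b c d x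
           else g2f a b c d x) • castV (tripZ a' b' c' d' (σ i)), ?_, ?_⟩
        · rw [hsing, pr2_single k hk, smul_zero, zero_add]
        · exact isIntV_intsmul (hgint i ⟨k, hk, hsing⟩ x hx) (castV_int _)
    obtain ⟨δ0, hδ0, hδ0i⟩ := hδ 0
    obtain ⟨δ1, hδ1, hδ1i⟩ := hδ 1
    obtain ⟨δ2, hδ2, hδ2i⟩ := hδ 2
    rw [if_pos (rfl : (0:Fin 3) = 0)] at hδ0
    rw [if_neg (show ¬(1:Fin 3) = 0 by decide), if_pos (rfl : (1:Fin 3) = 1)] at hδ1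
    rw [if_neg (show ¬(2:Fin 3) = 0 by decide), if_neg (show ¬(2:Fin 3) = 1 by decide)] at hδ2
    have hkey : g0f a b c d x • castV (tripZ a' b' c' d' (σ 0))
        + g1f a b c d x • castV (tripZ a' b' c' d' (σ 1))
        + g2f a b c d x • castV (tripZ a' b' c' d' (σ 2))
        = pr2 n (UmapP n M bb (embP n x)) + (δ0 + (δ1 + δ2)) := by
      rw [hstar x, pr2_add, pr2_add, pr2_smul, pr2_smul, pr2_smul]
      rw [hδ0, hδ1, hδ2]
      module
    rw [hkey]
    exact isIntV_add (pr2_int (UmapP_int n M bb (embP_int hx)))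
      (isIntV_add hδ0i (isIntV_add hδ1i hδ2i))
  -- step 4: apply PK2
  have hsetkey : ({castV (tripZ a' b' c' d' (σ 0)), castV (tripZ a' b' c' d' (σ 1)),
      castV (tripZ a' b' c' d' (σ 2))} : Set (Fin 2 → ℝ))
      = {planarPt 2 0 0, planarPt 2 a' b', planarPt 2 c' d'} := by
    rw [triple_set_eq σ hσ (fun j => castV (tripZ a' b' c' d' j))]
    have e0 : castV (tripZ a' b' c' d' 0) = planarPt 2 0 0 := by
      rw [← embP_two (castV (tripZ a' b' c' d' 0))]
      exact castV_tripZ_0 2 a' b' c' d'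
    have e1 : castV (tripZ a' b' c' d' 1) = planarPt 2 a' b' := by
      rw [← embP_two (castV (tripZ a' b' c' d' 1))]
      exact castV_tripZ_1 2 a' b' c' d'
    have e2 : castV (tripZ a' b' c' d' 2) = planarPt 2 c' d' := by
      rw [← embP_two (castV (tripZ a' b' c' d' 2))]
      exact castV_tripZ_2 2 a' b' c' d'
    rw [e0, e1, e2]
  exact PK2 a b c d a' b' c' d' h1 (fun i => tripZ a' b' c' d' (σ i)) hsetkey
    (trip_det a' b' c' d' σ hσ)
    (fun j => hFint (Pi.single j 1) (single_int j))

lemma UmapP_right_inv (n : ℕ) (M : Matrix (Fin n) (Fin n) ℤ) (bb : Fin n → ℤ)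
    (hdet : M.det = 1 ∨ M.det = -1) (x : Fin n → ℝ) :
    UmapP n M bb (UmapP n (MinvP n M) (binvP n M bb) x) = x := by
  unfold UmapP
  have hcast : ((M * MinvP n M).map (Int.cast : ℤ → ℝ))
      = (M.map Int.cast) * ((MinvP n M).map Int.cast) := by
    ext i j
    simp only [Matrix.map_apply, Matrix.mul_apply]
    push_cast
    ring
  have hmm : (M.map (Int.cast : ℤ → ℝ)) * ((MinvP n M).map (Int.cast : ℤ → ℝ)) = 1 := by
    rw [← hcast, mul_MinvP n M hdet]
    exact Matrix.map_one _ (by simp) (by simp)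
  have hz : M.mulVec (binvP n M bb) = -bb := by
    unfold binvP
    rw [Matrix.mulVec_neg, Matrix.mulVec_mulVec, mul_MinvP n M hdet, Matrix.one_mulVec]
  funext i
  simp only [Matrix.mulVec_add, Pi.add_apply]
  rw [Matrix.mulVec_mulVec, hmm, Matrix.one_mulVec]
  have hb := cast_mulVec n M (binvP n M bb) i
  rw [hb, hz]
  simp only [Pi.neg_apply]
  push_cast
  ring

lemma planar_ne (a b c d : ℤ) (h1 : a * d - b * c ≠ 0) {n : ℕ} (hn : 2 < n) :
    planarPt n 0 0 ≠ planarPt n a b ∧ planarPt n 0 0 ≠ planarPt n c d ∧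
      planarPt n a b ≠ planarPt n c d := by
  refine ⟨?_, ?_, ?_⟩
  · intro h
    have e0 := congrFun h ⟨0, by omega⟩
    have e1 := congrFun h ⟨1, by omega⟩
    rw [planarPt_app0 hn, planarPt_app0 hn] at e0
    rw [planarPt_app1 hn, planarPt_app1 hn] at e1
    have ha : (0 : ℤ) = a := by exact_mod_cast e0
    have hb : (0 : ℤ) = b := by exact_mod_cast e1
    apply h1
    rw [← ha, ← hb]
    ring
  · intro h
    have e0 := congrFun h ⟨0, by omega⟩
    have e1 := congrFun h ⟨1, by omega⟩
    rw [planarPt_app0 hn, planarPt_app0 hn] at e0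
    rw [planarPt_app1 hn, planarPt_app1 hn] at e1
    have hc : (0 : ℤ) = c := by exact_mod_cast e0
    have hd : (0 : ℤ) = d := by exact_mod_cast e1
    apply h1
    rw [← hc, ← hd]
    ring
  · intro h
    have e0 := congrFun h ⟨0, by omega⟩
    have e1 := congrFun h ⟨1, by omega⟩
    rw [planarPt_app0 hn, planarPt_app0 hn] at e0
    rw [planarPt_app1 hn, planarPt_app1 hn] at e1
    have hac : (a : ℤ) = c := by exact_mod_cast e0
    have hbd : (b : ℤ) = d := by exact_mod_cast e1
    apply h1
    linear_combination d * hac - c * hbd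

lemma main_half (a b c d a' b' c' d' : ℤ) (h1 : a * d - b * c ≠ 0)
    (h2 : a' * d' - b' * c' ≠ 0) (n : ℕ) (hn : 2 < n)
    (M : Matrix (Fin n) (Fin n) ℤ) (bb : Fin n → ℤ)
    (hMdet : M.det = 1 ∨ M.det = -1)
    (himg : UmapP n M bb '' pyramid n a b c d = pyramid n a' b' c' d') :
    ∃ (B : Matrix (Fin 2) (Fin 2) ℤ) (s : Fin 2 → ℤ) (ε : ℤ), (ε = 1 ∨ ε = -1) ∧
      B.det * (a * d - b * c) = ε * (a' * d' - b' * c') ∧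
      UmapP 2 B s '' {planarPt 2 0 0, planarPt 2 a b, planarPt 2 c d}
        = {planarPt 2 0 0, planarPt 2 a' b', planarPt 2 c' d'} := by
  set U := UmapP n M bb with hUdef
  set W := UmapP n (MinvP n M) (binvP n M bb) with hWdef
  have hWU : ∀ x, W (U x) = x := fun x => UmapP_left_inv n M bb hMdet x
  have hUW : ∀ x, U (W x) = x := fun x => UmapP_right_inv n M bb hMdet x
  have hWaff : ∀ (p q : ℝ) (x y : Fin n → ℝ), p + q = 1 →
      W (p • x + q • y) = p • W x + q • W y :=
    fun p q x y hpq => UmapP_affine2 n (MinvP n M) (binvP n M bb) p q x y hpq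
  obtain ⟨hv0, hv1, hv2⟩ := verts_mem_image a b c d a' b' c' d' h1 n hn U W hWU hUW hWaff himg
  have hUinj : Function.Injective U := by
    intro u v huv
    have := congrArg W huv
    rwa [hWU, hWU] at this
  obtain ⟨hne01, hne02, hne12⟩ := planar_ne a b c d h1 hn
  set y : Fin 3 → (Fin n → ℝ) :=
    ![U (planarPt n 0 0), U (planarPt n a b), U (planarPt n c d)] with hy
  have hy0 : y 0 = U (planarPt n 0 0) := rfl
  have hy1 : y 1 = U (planarPt n a b) := rfl
  have hy2 : y 2 = U (planarPt n c d) := rfl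
  have hU01 : y 0 ≠ y 1 := by
    rw [hy0, hy1]
    intro h
    exact hne01 (hUinj h)
  have hU02 : y 0 ≠ y 2 := by
    rw [hy0, hy2]
    intro h
    exact hne02 (hUinj h)
  have hU12 : y 1 ≠ y 2 := by
    rw [hy1, hy2]
    intro h
    exact hne12 (hUinj h)
  have hyinj : Function.Injective y := by
    intro i j hij
    rcases fin3_cases i with rfl | rfl | rfl <;> rcases fin3_cases j with rfl | rfl | rfl <;>
      first
      | rfl
      | exact absurd hij hU01
      | exact absurd hij hU02
      | exact absurd hij hU12
      | exact absurd hij.symm hU01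
      | exact absurd hij.symm hU02
      | exact absurd hij.symm hU12
  have hstar : ∀ x : Fin 2 → ℝ, U (embP n x)
      = g0f a b c d x • y 0 + g1f a b c d x • y 1 + g2f a b c d x • y 2 := by
    intro x
    rw [hy0, hy1, hy2, emb_comb a b c d h1 n hn x]
    exact UmapP_affine3 n M bb _ _ _ _ _ _ (by unfold g0f; ring)
  have hshape : ∀ v, v ∈ pyramidVerts n a' b' c' d' →
      (∃ r : Fin 3, v = embP n (castV (tripZ a' b' c' d' r))) ∨
      (∃ k : Fin n, 2 ≤ (k : ℕ) ∧ v = Pi.single k 1) := by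
    intro v hv
    rcases hv with (h | h | h) | ⟨k, hk, h⟩
    · exact Or.inl ⟨0, by rw [h]; exact (castV_tripZ_0 n a' b' c' d').symm⟩
    · exact Or.inl ⟨1, by rw [h]; exact (castV_tripZ_1 n a' b' c' d').symm⟩
    · exact Or.inl ⟨2, by rw [h]; exact (castV_tripZ_2 n a' b' c' d').symm⟩
    · exact Or.inr ⟨k, hk, h⟩
  have hyshape : ∀ i, (∃ r : Fin 3, y i = embP n (castV (tripZ a' b' c' d' r))) ∨
      (∃ k : Fin n, 2 ≤ (k : ℕ) ∧ y i = Pi.single k 1) := by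
    intro i
    rcases fin3_cases i with rfl | rfl | rfl
    · exact hshape _ hv0
    · exact hshape _ hv1
    · exact hshape _ hv2
  exact FINISH a b c d a' b' c' d' h1 h2 n hn M bb y hstar hyinj hyshape

lemma pyramidVerts_two (A B C D : ℤ) :
    pyramidVerts 2 A B C D = {planarPt 2 0 0, planarPt 2 A B, planarPt 2 C D} := by
  unfold pyramidVerts
  have hempty : {x : Fin 2 → ℝ | ∃ i : Fin 2, 2 ≤ (i : ℕ) ∧ x = Pi.single i 1} = ∅ := by
    ext x
    simp only [Set.mem_setOf_eq, Set.mem_empty_iff_false, iff_false, not_exists]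
    rintro i ⟨hi, -⟩
    exact absurd i.isLt (by omega)
  rw [hempty, Set.union_empty]
end AuxPyr

/-- If for some `n > 2` the n-dimensional pyramids of the integral 2-simplices
`conv{(0,0),(a,b),(c,d)}` and `conv{(0,0),(a',b'),(c',d')}` are unimodularly equivalent,
then those two 2-simplices are unimodularly equivalent. -/
theorem base_unimodEquiv_of_pyramid (a b c d a' b' c' d' : ℤ)
    (h1 : a * d - b * c ≠ 0) (h2 : a' * d' - b' * c' ≠ 0)
    (n : ℕ) (hn : 2 < n)
    (h : UnimodEquiv n (pyramid n a b c d) (pyramid n a' b' c' d')) :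
    UnimodEquiv 2 (pyramid 2 a b c d) (pyramid 2 a' b' c' d') := by
  obtain ⟨U, ⟨A, bbv, hAdet, hUeq⟩, himg⟩ := h
  have hU : U = UmapP n A bbv := funext hUeq
  rw [hU] at himg
  have fwd := main_half a b c d a' b' c' d' h1 h2 n hn A bbv hAdet himg
  have hWimg : UmapP n (MinvP n A) (binvP n A bbv) '' pyramid n a' b' c' d'
      = pyramid n a b c d := by
    rw [← himg, ← Set.image_comp]
    have hcomp : (UmapP n (MinvP n A) (binvP n A bbv)) ∘ (UmapP n A bbv) = id :=
      funext (UmapP_left_inv n A bbv hAdet)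
    rw [hcomp, Set.image_id]
  have hMinvdet : (MinvP n A).det = 1 ∨ (MinvP n A).det = -1 := by
    have hmul : (MinvP n A).det * A.det = 1 := by
      rw [← Matrix.det_mul, MinvP_mul n A hAdet, Matrix.det_one]
    exact Int.isUnit_iff.mp (IsUnit.of_mul_eq_one _ hmul)
  have bwd := main_half a' b' c' d' a b c d h2 h1 n hn (MinvP n A) (binvP n A bbv)
    hMinvdet hWimg
  obtain ⟨B, s, ε, hε, hdet, himg2⟩ := fwd
  obtain ⟨C, s', ε', hε', hdet', -⟩ := bwd
  have hmm' : (a * d - b * c) * (a' * d' - b' * c') ≠ 0 := mul_ne_zero h1 h2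
  have h3 : (B.det * C.det) * ((a * d - b * c) * (a' * d' - b' * c'))
      = (ε * ε') * ((a * d - b * c) * (a' * d' - b' * c')) := by
    linear_combination (C.det * (a' * d' - b' * c')) * hdet
      + (ε * (a' * d' - b' * c')) * hdet'
  have key : B.det * C.det = ε * ε' := mul_right_cancel₀ hmm' h3
  have hBdet : B.det = 1 ∨ B.det = -1 := by
    apply Int.isUnit_iff.mp
    rcases hε with rfl | rfl <;> rcases hε' with rfl | rfl
    · exact IsUnit.of_mul_eq_one _ (by rw [key]; ring)
    · exact IsUnit.of_mul_eq_one (-C.det) (by rw [mul_neg, key]; ring)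
    · exact IsUnit.of_mul_eq_one (-C.det) (by rw [mul_neg, key]; ring)
    · exact IsUnit.of_mul_eq_one _ (by rw [key]; ring)
  refine ⟨UmapP 2 B s, ⟨B, s, hBdet, fun v => rfl⟩, ?_⟩
  show UmapP 2 B s '' pyramid 2 a b c d = pyramid 2 a' b' c' d'
  rw [pyramid, pyramid, pyramidVerts_two, pyramidVerts_two, image_hull_UmapP, himg2]
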